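/- Let Σ be a finite set of unary functional dependencies, ID[1] rules, and ID[2] rules over a signature σ, and τ an ID[2] rule. Let σ₊ be obtained from σ by adding, to each relation R, a fresh position R₊^{δ,1} for each ID[1] rule δ: R^p ⊆ S^q of Σ and a fresh position R₊^{δ,2} for each ID[1] rule δ: S^q ⊆ R^p of Σ. Encode each ID[1] rule δ: R^p ⊆ S^q of Σ as the ID[2] rule R₊^p R₊^{δ,1} ⊆ S₊^q S₊^{δ,2}, and rewrite the ID[2] rules and UFDs of Σ verbatim onto σ₊; let Σ' be the resulting set. Then Σ ⊨ τ iff Σ' ⊨ τ (with τ read over σ₊). Consequently, the entailment problem for UFD ∧ ID[1] ∧ ID[2] and ID[2] reduces to the entailment problem for UFD ∧ ID[2] and ID[2]. -/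

import Mathlib

/-- A relational signature, with a type of positions for each relation. -/
structure PSig : Type 1 where
  Rel : Type
  Pos : Rel → Type

/-- An interpretation: tuples are functions from positions to the domain. -/
structure PInterp (σ : PSig) : Type 1 where
  Dom : Type
  rel : ∀ R : σ.Rel, Set (σ.Pos R → Dom)

/-- A unary functional dependency `R^p → R^q`. -/
structure PUFD (σ : PSig) where
  R : σ.Rel
  p : σ.Pos R
  q : σ.Pos R

def satPUFD {σ : PSig} (I : PInterp σ) (φ : PUFD σ) : Prop :=
  ∀ t ∈ I.rel φ.R, ∀ t' ∈ I.rel φ.R, t φ.p = t' φ.p → t φ.q = t' φ.q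

/-- A frontier-one inclusion dependency `R^p ⊆ S^q`. -/
structure PID1 (σ : PSig) where
  R : σ.Rel
  S : σ.Rel
  p : σ.Pos R
  q : σ.Pos S

def satPID1 {σ : PSig} (I : PInterp σ) (δ : PID1 σ) : Prop :=
  ∀ t ∈ I.rel δ.R, ∃ u ∈ I.rel δ.S, u δ.q = t δ.p

/-- A frontier-two inclusion dependency `R^a R^b ⊆ S^c S^d` (with `a ≠ b`, `c ≠ d`,
so no position is repeated in the body atom or in the head atom). -/
structure PID2 (σ : PSig) where
  R : σ.Rel
  S : σ.Rel
  a : σ.Pos R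
  b : σ.Pos R
  c : σ.Pos S
  d : σ.Pos S
  hab : a ≠ b
  hcd : c ≠ d

def satPID2 {σ : PSig} (I : PInterp σ) (δ : PID2 σ) : Prop :=
  ∀ t ∈ I.rel δ.R, ∃ u ∈ I.rel δ.S, u δ.c = t δ.a ∧ u δ.d = t δ.b

/-- The signature σ₊: each relation `R` gets one fresh position `R₊^{δ,1}` for each
ID[1] rule `δ : R^p ⊆ S^q` of `Δ₁` whose body relation is `R`, and one fresh
position `R₊^{δ,2}` for each ID[1] rule `δ : S^q ⊆ R^p` of `Δ₁` whose head
relation is `R`. -/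
def sigPlus (σ : PSig) (Δ₁ : Set (PID1 σ)) : PSig :=
  ⟨σ.Rel, fun R => σ.Pos R ⊕
    ({δ : PID1 σ // δ ∈ Δ₁ ∧ δ.R = R} ⊕ {δ : PID1 σ // δ ∈ Δ₁ ∧ δ.S = R})⟩

/-- Verbatim rewriting of a UFD of σ onto σ₊. -/
def liftUFD {σ : PSig} (Δ₁ : Set (PID1 σ)) (φ : PUFD σ) : PUFD (sigPlus σ Δ₁) :=
  ⟨φ.R, Sum.inl φ.p, Sum.inl φ.q⟩

/-- Verbatim rewriting of an ID[2] rule of σ onto σ₊. -/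
def liftID2 {σ : PSig} (Δ₁ : Set (PID1 σ)) (δ : PID2 σ) : PID2 (sigPlus σ Δ₁) :=
  ⟨δ.R, δ.S, Sum.inl δ.a, Sum.inl δ.b, Sum.inl δ.c, Sum.inl δ.d,
   fun h => δ.hab (Sum.inl.inj h), fun h => δ.hcd (Sum.inl.inj h)⟩

/-- Encoding of an ID[1] rule `δ : R^p ⊆ S^q` of `Δ₁` as the ID[2] rule
`R₊^p R₊^{δ,1} ⊆ S₊^q S₊^{δ,2}` on σ₊. -/
def encodeID1 {σ : PSig} (Δ₁ : Set (PID1 σ)) (δ : PID1 σ) (hδ : δ ∈ Δ₁) :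
    PID2 (sigPlus σ Δ₁) :=
  ⟨δ.R, δ.S, Sum.inl δ.p, Sum.inr (Sum.inl ⟨δ, hδ, rfl⟩),
   Sum.inl δ.q, Sum.inr (Sum.inr ⟨δ, hδ, rfl⟩),
   fun h => Sum.inl_ne_inr h, fun h => Sum.inl_ne_inr h⟩

/-- for `Σ` consisting of UFDs `Φ`, ID[1] rules `Δ₁` and ID[2] rules
`Δ₂` over σ and an ID[2] rule `τ`, encoding each ID[1] rule `δ : R^p ⊆ S^q` as the
ID[2] rule `R₊^p R₊^{δ,1} ⊆ S₊^q S₊^{δ,2}` over σ₊ and rewriting the other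
constraints verbatim yields `Σ'` with `Σ ⊨ τ` iff `Σ' ⊨ τ`. (Consequently,
entailment for UFD ∧ ID[1] ∧ ID[2] and ID[2] reduces to entailment for
UFD ∧ ID[2] and ID[2].) -/
theorem id1_elimination (σ : PSig) (Φ : Set (PUFD σ)) (Δ₁ : Set (PID1 σ))
    (Δ₂ : Set (PID2 σ)) (hΦ : Φ.Finite) (hΔ₁ : Δ₁.Finite) (hΔ₂ : Δ₂.Finite)
    (τ : PID2 σ) :
    (∀ I : PInterp σ,
        ((∀ φ ∈ Φ, satPUFD I φ) ∧ (∀ δ ∈ Δ₁, satPID1 I δ) ∧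
         (∀ δ ∈ Δ₂, satPID2 I δ)) → satPID2 I τ)
    ↔
    (∀ I' : PInterp (sigPlus σ Δ₁),
        ((∀ φ ∈ Φ, satPUFD I' (liftUFD Δ₁ φ)) ∧
         (∀ δ : PID1 σ, ∀ hδ : δ ∈ Δ₁, satPID2 I' (encodeID1 Δ₁ δ hδ)) ∧
         (∀ δ ∈ Δ₂, satPID2 I' (liftID2 Δ₁ δ))) →
        satPID2 I' (liftID2 Δ₁ τ)) := by
  constructor
  · -- Σ ⊨ τ → Σ' ⊨ τ
    intro h I' ⟨hU, h1, h2⟩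
    let I : PInterp σ :=
      ⟨I'.Dom, fun R => {t | ∃ t' ∈ I'.rel R, t = fun p => t' (Sum.inl p)}⟩
    have hτ : satPID2 I τ := by
      apply h
      refine ⟨?_, ?_, ?_⟩
      · rintro φ hφ t ⟨u, hu, rfl⟩ t' ⟨u', hu', rfl⟩ hp
        exact hU φ hφ u hu u' hu' hp
      · rintro δ hδ t ⟨u, hu, rfl⟩
        obtain ⟨v, hv, hc, _⟩ := h1 δ hδ u hu
        exact ⟨fun p => v (Sum.inl p), ⟨v, hv, rfl⟩, hc⟩
      · rintro δ hδ t ⟨u, hu, rfl⟩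
        obtain ⟨v, hv, hc, hd⟩ := h2 δ hδ u hu
        exact ⟨fun p => v (Sum.inl p), ⟨v, hv, rfl⟩, hc, hd⟩
    intro t ht
    obtain ⟨w, ⟨v, hv, rfl⟩, hc, hd⟩ := hτ (fun p => t (Sum.inl p)) ⟨t, ht, rfl⟩
    exact ⟨v, hv, hc, hd⟩
  · -- Σ' ⊨ τ → Σ ⊨ τ
    intro h I ⟨hU, h1, h2⟩
    classical
    let I' : PInterp (sigPlus σ Δ₁) :=
      ⟨I.Dom, fun R => {t' | (fun p => t' (Sum.inl p)) ∈ I.rel R}⟩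
    have hτ : satPID2 I' (liftID2 Δ₁ τ) := by
      apply h
      refine ⟨?_, ?_, ?_⟩
      · intro φ hφ t ht t' ht' hp
        exact hU φ hφ _ ht _ ht' hp
      · intro δ hδ t ht
        obtain ⟨u, hu, hq⟩ := h1 δ hδ _ ht
        refine ⟨fun x =>
          match x with
          | Sum.inl p => u p
          | Sum.inr (Sum.inl _) => t (Sum.inl δ.p)
          | Sum.inr (Sum.inr e) =>
              if e = (⟨δ, hδ, rfl⟩ : {δ' : PID1 σ // δ' ∈ Δ₁ ∧ δ'.S = δ.S}) then
                t (Sum.inr (Sum.inl ⟨δ, hδ, rfl⟩))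
              else t (Sum.inl δ.p), ?_, ?_, ?_⟩
        · exact hu
        · exact hq
        · exact if_pos rfl
      · intro δ hδ t ht
        obtain ⟨u, hu, hc, hd⟩ := h2 δ hδ _ ht
        refine ⟨Sum.elim u (fun _ => t (Sum.inl δ.a)), hu, hc, hd⟩
    intro t ht
    have ht' : (Sum.elim t (fun _ => t τ.a) : (sigPlus σ Δ₁).Pos τ.R → I.Dom)
        ∈ I'.rel τ.R := ht
    obtain ⟨u', hu', hc, hd⟩ := hτ _ ht'
    exact ⟨fun p => u' (Sum.inl p), hu', hc, hd⟩
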